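/- Let a ∈ ℝ, γ > 0, P with γ² ≥ P > 1 and (P + 1)² ≠ 4γ², X = P + γ² − 1, ĝ = γ²·a/X, and assume a²/X = 1/P − 1/γ². Let x̂ ∈ ℝ. Then z ∈ ℝ satisfies −(P/(P−1))·x̂² + (P·x̂/2 + γ²·z)²/X − (−P·x̂/2 + γ²·z)²/γ² − P·x̂² = −4·(P/(P−1))·ĝ²·z² if and only if z = (1/(2γ²))·(P + 2γ² − 1)·((P − 1 + 2·sqrt(γ² − P))/((P + 1)² − 4γ²))·P·x̂ or z = (1/(2γ²))·(P + 2γ² − 1)·((P − 1 − 2·sqrt(γ² − P))/((P + 1)² − 4γ²))·P·x̂. -/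

import Mathlib

set_option maxHeartbeats 1000000


/-- Root computation for the boundary of `Ī₋₁`: with `X = P + γ² − 1`, `ĝ = γ²a/X`,
the Riccati relation `a²/X = 1/P − 1/γ²`, `γ² ≥ P > 1` and `(P + 1)² ≠ 4γ²`, the
equation
`−(P/(P−1)) x̂² + (P x̂/2 + γ² z)²/X − (−P x̂/2 + γ² z)²/γ² − P x̂² = −4 (P/(P−1)) ĝ² z²`
holds iff `z = (1/(2γ²)) (P + 2γ² − 1) ((P − 1 ± 2√(γ² − P))/((P+1)² − 4γ²)) P x̂`. -/
theorem roots_Ibar_minus_one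
    (a γ P X ghat xh : ℝ) (hγ : 0 < γ) (hP : 1 < P) (hPγ : P ≤ γ ^ 2)
    (hne : (P + 1) ^ 2 ≠ 4 * γ ^ 2)
    (hX : X = P + γ ^ 2 - 1) (hg : ghat = γ ^ 2 * a / X)
    (hric : a ^ 2 / X = 1 / P - 1 / γ ^ 2) :
    ∀ z : ℝ,
      (-(P / (P - 1)) * xh ^ 2 + (P * xh / 2 + γ ^ 2 * z) ^ 2 / X
          - (-(P * xh) / 2 + γ ^ 2 * z) ^ 2 / γ ^ 2 - P * xh ^ 2
        = -4 * (P / (P - 1)) * ghat ^ 2 * z ^ 2)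
      ↔ (z = (1 / (2 * γ ^ 2)) * (P + 2 * γ ^ 2 - 1)
            * ((P - 1 + 2 * Real.sqrt (γ ^ 2 - P)) / ((P + 1) ^ 2 - 4 * γ ^ 2))
            * P * xh
        ∨ z = (1 / (2 * γ ^ 2)) * (P + 2 * γ ^ 2 - 1)
            * ((P - 1 - 2 * Real.sqrt (γ ^ 2 - P)) / ((P + 1) ^ 2 - 4 * γ ^ 2))
            * P * xh) := by
  intro z
  set s : ℝ := Real.sqrt (γ ^ 2 - P) with hs
  have hs2 : s ^ 2 = γ ^ 2 - P := Real.sq_sqrt (by linarith)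
  have hg2 : (0:ℝ) < γ ^ 2 := by positivity
  have hP1 : (0:ℝ) < P - 1 := by linarith
  have hP0 : (0:ℝ) < P := by linarith
  have hX0 : 0 < X := by rw [hX]; nlinarith
  have hD : (P + 1) ^ 2 - 4 * γ ^ 2 ≠ 0 := sub_ne_zero.mpr hne
  have ha2 : a ^ 2 = (1 / P - 1 / γ ^ 2) * X := (div_eq_iff hX0.ne').mp hric
  have hghat : ghat ^ 2 = γ ^ 2 * (γ ^ 2 - P) / (P * X) := by
    rw [hg, div_pow, mul_pow, ha2]
    field_simp
  set R1 : ℝ := (1 / (2 * γ ^ 2)) * (P + 2 * γ ^ 2 - 1)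
      * ((P - 1 + 2 * s) / ((P + 1) ^ 2 - 4 * γ ^ 2)) * P * xh with hR1
  set R2 : ℝ := (1 / (2 * γ ^ 2)) * (P + 2 * γ ^ 2 - 1)
      * ((P - 1 - 2 * s) / ((P + 1) ^ 2 - 4 * γ ^ 2)) * P * xh with hR2
  have hsum : R1 + R2 = (P + 2 * γ ^ 2 - 1) * (P - 1) * P * xh
      / (γ ^ 2 * ((P + 1) ^ 2 - 4 * γ ^ 2)) := by
    rw [hR1, hR2]; field_simp; ring
  have hprod : R1 * R2 = (P + 2 * γ ^ 2 - 1) ^ 2 * P ^ 2 * xh ^ 2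
      / (4 * γ ^ 2 * γ ^ 2 * ((P + 1) ^ 2 - 4 * γ ^ 2)) := by
    rw [hR1, hR2]
    have hDD : (P - 1 + 2 * s) / ((P + 1) ^ 2 - 4 * γ ^ 2)
        * ((P - 1 - 2 * s) / ((P + 1) ^ 2 - 4 * γ ^ 2))
        = 1 / ((P + 1) ^ 2 - 4 * γ ^ 2) := by
      rw [div_mul_div_comm,
        show (P - 1 + 2 * s) * (P - 1 - 2 * s) = (P + 1) ^ 2 - 4 * γ ^ 2 from by
          linear_combination (-4) * hs2]
      rw [div_mul_eq_div_div_swap, div_self hD, one_div]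
    rw [show (1 / (2 * γ ^ 2)) * (P + 2 * γ ^ 2 - 1)
          * ((P - 1 + 2 * s) / ((P + 1) ^ 2 - 4 * γ ^ 2)) * P * xh
        * ((1 / (2 * γ ^ 2)) * (P + 2 * γ ^ 2 - 1)
          * ((P - 1 - 2 * s) / ((P + 1) ^ 2 - 4 * γ ^ 2)) * P * xh)
        = (1 / (2 * γ ^ 2)) ^ 2 * (P + 2 * γ ^ 2 - 1) ^ 2 * P ^ 2 * xh ^ 2
          * ((P - 1 + 2 * s) / ((P + 1) ^ 2 - 4 * γ ^ 2)
            * ((P - 1 - 2 * s) / ((P + 1) ^ 2 - 4 * γ ^ 2))) from by ring,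
      hDD]
    field_simp
    ring
  have hfac :
      (-(P / (P - 1)) * xh ^ 2 + (P * xh / 2 + γ ^ 2 * z) ^ 2 / X
          - (-(P * xh) / 2 + γ ^ 2 * z) ^ 2 / γ ^ 2 - P * xh ^ 2)
        - (-4 * (P / (P - 1)) * ghat ^ 2 * z ^ 2)
      = (-(γ ^ 2 * ((P + 1) ^ 2 - 4 * γ ^ 2)) / ((P - 1) * X))
          * ((z - R1) * (z - R2)) := by
    have hq : (z - R1) * (z - R2) = z ^ 2 - (R1 + R2) * z + R1 * R2 := by ring
    rw [hq, hsum, hprod, hghat, hX]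
    have hX' : P + γ ^ 2 - 1 ≠ 0 := by nlinarith
    have hD' : (P + 1) ^ 2 - γ ^ 2 * 4 ≠ 0 := fun h => hD (by linarith)
    field_simp
    ring
  constructor
  · intro h
    have h0 : (-(γ ^ 2 * ((P + 1) ^ 2 - 4 * γ ^ 2)) / ((P - 1) * X))
        * ((z - R1) * (z - R2)) = 0 := by
      rw [← hfac, h]; ring
    have hC : (-(γ ^ 2 * ((P + 1) ^ 2 - 4 * γ ^ 2)) / ((P - 1) * X)) ≠ 0 := by
      apply div_ne_zero
      · intro hc
        apply hD
        have : γ ^ 2 * ((P + 1) ^ 2 - 4 * γ ^ 2) = 0 := by linarith [neg_eq_zero.mp hc]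
        rcases mul_eq_zero.mp this with h' | h'
        · exact absurd h' hg2.ne'
        · exact h'
      · positivity
    have := (mul_eq_zero.mp h0).resolve_left hC
    rcases mul_eq_zero.mp this with h' | h'
    · exact Or.inl (sub_eq_zero.mp h')
    · exact Or.inr (sub_eq_zero.mp h')
  · intro h
    have h0 : (z - R1) * (z - R2) = 0 := by
      rcases h with h | h <;> rw [h] <;> ring
    have := hfac
    rw [h0, mul_zero] at this
    linarith [this]
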